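/- arXiv:1502.06007 — 6 statements merged into one kernel-verified Lean document; each statement's English description precedes it below -/
import Mathlib

section
/- Let N and d_1, …, d_K be natural numbers with d_i ≤ N for every i and Σ_{i=1}^K d_i = 2N. Then there exist subspaces V_1, …, V_K of the complex vector space ℂ^N such that (V_1, …, V_K) is a feasible strategy for (K, N, d_1, …, d_K). -/
/-- `(V 0, …, V (K-1))` is a *feasible strategy* for `(K, d 0, …, d (K-1))`:
(i) `dim (V i) = d i` for all `i`;
(ii) for every `i`, the family `(V i ⊓ V j)_{j ≠ i}` is independent and
    `V i = ⨆_{j ≠ i} (V i ⊓ V j)`;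
(iii) the family `(V i ⊓ V j)_{i < j}` is independent and its sup is the whole space. -/
def FeasibleStrategy {E : Type*} [AddCommGroup E] [Module ℂ E]
    {K : ℕ} (d : Fin K → ℕ) (V : Fin K → Submodule ℂ E) : Prop :=
  (∀ i, Module.finrank ℂ (V i) = d i) ∧
  (∀ i, iSupIndep (fun j : {j : Fin K // j ≠ i} => V i ⊓ V j.1) ∧
    V i = ⨆ j : {j : Fin K // j ≠ i}, V i ⊓ V j.1) ∧
  iSupIndep (fun p : {p : Fin K × Fin K // p.1 < p.2} => V p.1.1 ⊓ V p.1.2) ∧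
  (⨆ p : {p : Fin K × Fin K // p.1 < p.2}, V p.1.1 ⊓ V p.1.2) = ⊤

open Submodule in

/-- Loopless multigraph realization of a degree sequence. -/
lemma exists_multigraph : ∀ (N : ℕ) (K : ℕ) (d : Fin K → ℕ), (∀ i, d i ≤ N) →
    (∑ i, d i = 2 * N) →
    ∃ f : Fin N → Fin K × Fin K, (∀ k, (f k).1 < (f k).2) ∧
      ∀ i, (Finset.univ.filter fun k => (f k).1 = i ∨ (f k).2 = i).card = d i := by
  intro N
  induction N with
  | zero =>
    intro K d hle hsum
    refine ⟨Fin.elim0, fun k => k.elim0, fun i => ?_⟩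
    have : d i = 0 := Nat.le_zero.mp (hle i)
    simp [this]
  | succ N ih =>
    intro K d hle hsum
    -- K ≥ 2
    have hKpos : 0 < K := by
      rcases Nat.eq_zero_or_pos K with h | h
      · subst h; simp at hsum
      · exact h
    haveI : NeZero K := ⟨hKpos.ne'⟩
    -- choose i₀ maximizing d
    obtain ⟨i₀, hi₀⟩ := Finset.exists_max_image Finset.univ d ⟨⟨0, hKpos⟩, Finset.mem_univ _⟩
    have hi₀max : ∀ j, d j ≤ d i₀ := fun j => hi₀.2 j (Finset.mem_univ _)
    -- the rest has positive sum
    have hrest : ∑ j ∈ Finset.univ.erase i₀, d j = 2 * (N + 1) - d i₀ := by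
      have := Finset.add_sum_erase Finset.univ d (Finset.mem_univ i₀)
      omega
    have hrestpos : 0 < ∑ j ∈ Finset.univ.erase i₀, d j := by
      have := hle i₀; omega
    have hne : (Finset.univ.erase i₀).Nonempty := by
      by_contra h
      rw [Finset.not_nonempty_iff_eq_empty] at h
      rw [h] at hrestpos; simp at hrestpos
    obtain ⟨j₀, hj₀⟩ := Finset.exists_max_image (Finset.univ.erase i₀) d hne
    have hj₀ne : j₀ ≠ i₀ := (Finset.mem_erase.mp hj₀.1).1
    have hj₀max : ∀ j, j ≠ i₀ → d j ≤ d j₀ := fun j hj =>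
      hj₀.2 j (Finset.mem_erase.mpr ⟨hj, Finset.mem_univ _⟩)
    have hj₀pos : 0 < d j₀ := by
      by_contra h
      push_neg at h
      have : ∀ j ∈ Finset.univ.erase i₀, d j = 0 := fun j hj => by
        have := hj₀.2 j hj; omega
      rw [Finset.sum_eq_zero this] at hrest
      have := hle i₀; omega
    have hi₀pos : 0 < d i₀ := le_trans hj₀pos (hi₀max j₀)
    -- new degrees
    set d' : Fin K → ℕ := fun i => if i = i₀ ∨ i = j₀ then d i - 1 else d i with hd'
    have hle' : ∀ i, d' i ≤ N := by
      intro i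
      by_cases h : i = i₀ ∨ i = j₀
      · have := hle i; simp only [hd', if_pos h]
        rcases h with rfl | rfl
        · omega
        · omega
      · simp only [hd', if_neg h]
        push_neg at h
        by_contra hc
        push_neg at hc
        have h1 : d i = N + 1 := le_antisymm (hle i) hc
        have h2 : d j₀ ≥ N + 1 := h1 ▸ hj₀max i h.1
        have h3 : d i₀ ≥ N + 1 := le_trans h2 (hi₀max j₀)
        have h4 : ∑ j ∈ (Finset.univ.erase i₀).erase j₀, d j
            = 2 * (N + 1) - d i₀ - d j₀ := by
          have := Finset.add_sum_erase (Finset.univ.erase i₀) d hj₀.1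
          omega
        have h5 : i ∈ (Finset.univ.erase i₀).erase j₀ := by
          refine Finset.mem_erase.mpr ⟨h.2, Finset.mem_erase.mpr ⟨h.1, Finset.mem_univ _⟩⟩
        have h6 : d i ≤ ∑ j ∈ (Finset.univ.erase i₀).erase j₀, d j :=
          Finset.single_le_sum (fun _ _ => Nat.zero_le _) h5
        omega
    have hsum' : ∑ i, d' i = 2 * N := by
      have key : ∑ i, d' i = ∑ i, d i - 2 := by
        have h1 : ∑ i, d' i + ∑ i, (if i = i₀ ∨ i = j₀ then 1 else 0) = ∑ i, d i := by
          rw [← Finset.sum_add_distrib]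
          apply Finset.sum_congr rfl
          intro i _
          by_cases h : i = i₀ ∨ i = j₀
          · simp only [hd', if_pos h]
            rcases h with rfl | rfl
            · omega
            · omega
          · simp [hd', if_neg h]
        have h2 : ∑ i, (if i = i₀ ∨ i = j₀ then 1 else 0) = 2 := by
          have : ∀ i : Fin K, (if i = i₀ ∨ i = j₀ then (1:ℕ) else 0)
              = (if i = i₀ then 1 else 0) + (if i = j₀ then 1 else 0) := by
            intro i
            by_cases h1 : i = i₀ <;> by_cases h2 : i = j₀ <;> simp_all
          rw [Finset.sum_congr rfl (fun i _ => this i), Finset.sum_add_distrib]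
          simp [Finset.sum_ite_eq']
        omega
      omega
    obtain ⟨f', hf'lt, hf'count⟩ := ih K d' hle' hsum'
    -- the new edge
    have hlt : min i₀ j₀ < max i₀ j₀ := by
      rcases lt_or_gt_of_ne hj₀ne with h | h
      · simp [min_eq_left h.le, max_eq_left h.le, h]
      · simp [min_eq_right h.le, max_eq_right h.le, h]
    refine ⟨Fin.cons (min i₀ j₀, max i₀ j₀) f', ?_, ?_⟩
    · intro k
      refine Fin.cases ?_ ?_ k
      · exact hlt
      · intro k'; simpa using hf'lt k'
    · intro i
      rw [Finset.card_filter, Fin.sum_univ_succ]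
      simp only [Fin.cons_zero, Fin.cons_succ]
      have hsum2 : ∑ k : Fin N, (if (f' k).1 = i ∨ (f' k).2 = i then (1:ℕ) else 0) = d' i := by
        rw [← Finset.card_filter]; exact hf'count i
      rw [hsum2]
      by_cases h : i = i₀ ∨ i = j₀
      · have hmem : (min i₀ j₀, max i₀ j₀).1 = i ∨ (min i₀ j₀, max i₀ j₀).2 = i := by
          rcases h with rfl | rfl
          · rcases le_total i j₀ with h' | h'
            · left; simp [min_eq_left h']
            · right; simp [max_eq_left h']
          · rcases le_total i₀ i with h' | h'
            · right; simp [max_eq_right h']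
            · left; simp [min_eq_right h']
        rw [if_pos hmem]
        have : d' i = d i - 1 := by simp [hd', if_pos h]
        have hpos : 0 < d i := by rcases h with rfl | rfl <;> assumption
        omega
      · push_neg at h
        have hmem : ¬((min i₀ j₀, max i₀ j₀).1 = i ∨ (min i₀ j₀, max i₀ j₀).2 = i) := by
          rintro (h' | h')
          · rcases min_choice i₀ j₀ with hm | hm <;> rw [hm] at h' <;>
              [exact h.1 h'.symm; exact h.2 h'.symm]
          · rcases max_choice i₀ j₀ with hm | hm <;> rw [hm] at h' <;>
              [exact h.1 h'.symm; exact h.2 h'.symm]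
        rw [if_neg hmem]
        simp [hd', h.1, h.2]

section Helpers
open Submodule
variable {N : ℕ}

lemma mem_span_single (s : Set (Fin N)) (x : Fin N → ℂ) :
    x ∈ span ℂ (⇑(Pi.basisFun ℂ (Fin N)) '' s) ↔ ∀ k ∉ s, x k = 0 := by
  rw [Module.Basis.mem_span_image, Finsupp.support_subset_iff]
  simp

lemma span_single_inf (s t : Set (Fin N)) :
    span ℂ (⇑(Pi.basisFun ℂ (Fin N)) '' s) ⊓ span ℂ (⇑(Pi.basisFun ℂ (Fin N)) '' t)
      = span ℂ (⇑(Pi.basisFun ℂ (Fin N)) '' (s ∩ t)) := by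
  ext x
  simp only [Submodule.mem_inf, mem_span_single]
  constructor
  · rintro ⟨h1, h2⟩ k hk
    rcases Classical.em (k ∈ s) with h | h
    · exact h2 k (fun hkt => hk ⟨h, hkt⟩)
    · exact h1 k h
  · intro h
    exact ⟨fun k hk => h k (fun hk' => hk hk'.1), fun k hk => h k (fun hk' => hk hk'.2)⟩

lemma span_single_iSup {ι : Type*} (s : ι → Set (Fin N)) :
    (⨆ j, span ℂ (⇑(Pi.basisFun ℂ (Fin N)) '' s j))
      = span ℂ (⇑(Pi.basisFun ℂ (Fin N)) '' ⋃ j, s j) := by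
  rw [Set.image_iUnion, span_iUnion]

lemma finrank_span_single (s : Set (Fin N)) [Fintype s] :
    Module.finrank ℂ (span ℂ (⇑(Pi.basisFun ℂ (Fin N)) '' s)) = s.toFinset.card := by
  classical
  have hinj : Function.Injective ⇑(Pi.basisFun ℂ (Fin N)) :=
    (Pi.basisFun ℂ (Fin N)).injective
  have hli : LinearIndependent ℂ ((↑) : (⇑(Pi.basisFun ℂ (Fin N)) '' s) → (Fin N → ℂ)) :=
    LinearIndepOn.id_image ((Pi.basisFun ℂ (Fin N)).linearIndependent.comp ((↑) : s → Fin N)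
      Subtype.val_injective)
  rw [finrank_span_set_eq_card hli, Set.toFinset_image,
    Finset.card_image_of_injective _ hinj]

lemma iSupIndep_span_single {ι : Type*} (s : ι → Set (Fin N))
    (h : Pairwise (Function.onFun Disjoint s)) :
    iSupIndep (fun j => span ℂ (⇑(Pi.basisFun ℂ (Fin N)) '' s j)) := by
  rw [iSupIndep_def]
  intro i
  have hle : (⨆ (j) (_ : j ≠ i), span ℂ (⇑(Pi.basisFun ℂ (Fin N)) '' s j))
      ≤ span ℂ (⇑(Pi.basisFun ℂ (Fin N)) '' ⋃ (j) (_ : j ≠ i), s j) :=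
    iSup₂_le fun j hj => span_mono (Set.image_mono (Set.subset_iUnion₂ (s := fun j _ => s j) j hj))
  refine Disjoint.mono_right hle ?_
  rw [disjoint_iff, span_single_inf]
  have he : s i ∩ ⋃ (j) (_ : j ≠ i), s j = ∅ := by
    ext k
    simp only [Set.mem_inter_iff, Set.mem_iUnion, Set.mem_empty_iff_false, iff_false]
    rintro ⟨hki, j, hj, hkj⟩
    exact Set.disjoint_left.mp (h hj) hkj hki
  rw [he, Set.image_empty, span_empty]

end Helpers

theorem stmt1 (K N : ℕ) (d : Fin K → ℕ) (hle : ∀ i, d i ≤ N)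
    (hsum : ∑ i, d i = 2 * N) :
    ∃ V : Fin K → Submodule ℂ (Fin N → ℂ), FeasibleStrategy d V := by
  open Submodule in
  obtain ⟨f, hflt, hcount⟩ := exists_multigraph N K d hle hsum
  classical
  set S : Fin K → Set (Fin N) := fun i => {k | (f k).1 = i ∨ (f k).2 = i} with hS
  have key : ∀ (k : Fin N) (a c : Fin K), a < c → (k ∈ S a ∩ S c ↔ f k = (a, c)) := by
    intro k a c hac
    constructor
    · rintro ⟨ha | ha, hc | hc⟩
      · exact absurd hac (by rw [← ha, ← hc]; exact lt_irrefl _)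
      · exact Prod.ext ha hc
      · exact absurd hac (by rw [← ha, ← hc]; exact asymm (hflt k))
      · exact absurd hac (by rw [← ha, ← hc]; exact lt_irrefl _)
    · rintro h
      exact ⟨Or.inl (by rw [h]), Or.inr (by rw [h])⟩
  have hend : ∀ (k : Fin N) (i j : Fin K), i ≠ j → k ∈ S i → k ∈ S j →
      f k = (i, j) ∨ f k = (j, i) := by
    rintro k i j hij (h1 | h1) (h2 | h2)
    · exact absurd (h1.symm.trans h2) hij
    · exact Or.inl (Prod.ext h1 h2)
    · exact Or.inr (Prod.ext h2 h1)
    · exact absurd (h1.symm.trans h2) hij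
  refine ⟨fun i => span ℂ (⇑(Pi.basisFun ℂ (Fin N)) '' S i), ?_, ?_, ?_, ?_⟩
  · -- finrank
    intro i
    rw [finrank_span_single, ← hcount i]
    congr 1
    ext k
    simp [hS]
  · -- condition (ii)
    intro i
    have hdisj : Pairwise (Function.onFun Disjoint
        (fun j : {j : Fin K // j ≠ i} => S i ∩ S j.1)) := by
      intro j j' hjj'
      rw [Function.onFun, Set.disjoint_left]
      rintro k ⟨hki, hkj⟩ ⟨-, hkj'⟩
      apply hjj'
      have e1 := hend k i j.1 (Ne.symm j.2) hki hkj
      have e2 := hend k i j'.1 (Ne.symm j'.2) hki hkj'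
      apply Subtype.ext
      rcases e1 with e1 | e1 <;> rcases e2 with e2 | e2
      · exact congrArg Prod.snd (e1.symm.trans e2)
      · exact absurd (congrArg Prod.snd (e1.symm.trans e2)) j.2
      · exact absurd (congrArg Prod.snd (e1.symm.trans e2)).symm j'.2
      · exact congrArg Prod.fst (e1.symm.trans e2)
    constructor
    · simp only [span_single_inf]
      exact iSupIndep_span_single _ hdisj
    · have hu : (⋃ j : {j : Fin K // j ≠ i}, S i ∩ S j.1) = S i := by
        ext k
        simp only [Set.mem_iUnion, Set.mem_inter_iff]
        constructor
        · rintro ⟨j, hk, -⟩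
          exact hk
        · intro hk
          rcases hk with h1 | h1
          · rcases Classical.em ((f k).2 = i) with h2 | h2
            · exact absurd (hflt k) (by rw [h1, h2]; exact lt_irrefl i)
            · exact ⟨⟨(f k).2, h2⟩, ⟨Or.inl h1, Or.inr rfl⟩⟩
          · rcases Classical.em ((f k).1 = i) with h2 | h2
            · exact absurd (hflt k) (by rw [h1, h2]; exact lt_irrefl i)
            · exact ⟨⟨(f k).1, h2⟩, ⟨Or.inr h1, Or.inl rfl⟩⟩
      simp only [span_single_inf, span_single_iSup]
      rw [hu]
  · -- (iii) independence
    simp only [span_single_inf]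
    apply iSupIndep_span_single
    intro p q hpq
    rw [Function.onFun, Set.disjoint_left]
    rintro k hkp hkq
    apply hpq
    have h1 := (key k p.1.1 p.1.2 p.2).mp hkp
    have h2 := (key k q.1.1 q.1.2 q.2).mp hkq
    refine Subtype.ext ?_
    rw [← Prod.mk.eta (p := p.1), ← Prod.mk.eta (p := q.1)]
    exact h1.symm.trans h2
  · -- (iii) top
    simp only [span_single_inf, span_single_iSup]
    have hu : (⋃ p : {p : Fin K × Fin K // p.1 < p.2}, S p.1.1 ∩ S p.1.2) = Set.univ := by
      ext k
      simp only [Set.mem_iUnion, Set.mem_univ, iff_true]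
      exact ⟨⟨f k, hflt k⟩, (key k (f k).1 (f k).2 (hflt k)).mpr rfl⟩
    rw [hu, Set.image_univ, (Pi.basisFun ℂ (Fin N)).span_eq]
end

section
/- Let V be a complex vector space of dimension N, let d be a natural number with 3·d = 2·N, and let V_1, V_2, V_3 be subspaces of V, each of dimension d. Then (V_1, V_2, V_3) is a feasible strategy for (3, N, d, d, d) if and only if dim(V_i ∩ V_j) = 2d − N for every pair i < j and V_1 ∩ V_2 ∩ V_3 = 0. -/
section Helpers

variable {α : Type*} [CompleteLattice α] {ι : Type*}

lemma iSup_eq_pair (f : ι → α) (x y : ι) (huniv : ∀ k, k = x ∨ k = y) :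
    iSup f = f x ⊔ f y :=
  le_antisymm (iSup_le fun k => by
      rcases huniv k with rfl | rfl
      · exact le_sup_left
      · exact le_sup_right)
    (sup_le (le_iSup f x) (le_iSup f y))

lemma iSup_eq_triple (f : ι → α) (x y z : ι) (huniv : ∀ k, k = x ∨ k = y ∨ k = z) :
    iSup f = f x ⊔ f y ⊔ f z :=
  le_antisymm (iSup_le fun k => by
      rcases huniv k with rfl | rfl | rfl
      · exact le_sup_of_le_left le_sup_left
      · exact le_sup_of_le_left le_sup_right
      · exact le_sup_right)
    (sup_le (sup_le (le_iSup f x) (le_iSup f y)) (le_iSup f z))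

lemma iSupIndep_of_two (f : ι → α) (x y : ι)
    (huniv : ∀ k, k = x ∨ k = y) (h : Disjoint (f x) (f y)) :
    iSupIndep f := by
  rw [iSupIndep_def]
  intro i
  rcases huniv i with rfl | rfl
  · refine h.mono_right (iSup₂_le fun j hj => ?_)
    rcases huniv j with rfl | rfl
    · exact absurd rfl hj
    · exact le_rfl
  · refine h.symm.mono_right (iSup₂_le fun j hj => ?_)
    rcases huniv j with rfl | rfl
    · exact le_rfl
    · exact absurd rfl hj

lemma iSupIndep_of_three (f : ι → α) (x y z : ι)
    (huniv : ∀ k, k = x ∨ k = y ∨ k = z)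
    (hx : Disjoint (f x) (f y ⊔ f z)) (hy : Disjoint (f y) (f x ⊔ f z))
    (hz : Disjoint (f z) (f x ⊔ f y)) :
    iSupIndep f := by
  rw [iSupIndep_def]
  intro i
  rcases huniv i with rfl | rfl | rfl
  · refine hx.mono_right (iSup₂_le fun j hj => ?_)
    rcases huniv j with rfl | rfl | rfl
    · exact absurd rfl hj
    · exact le_sup_left
    · exact le_sup_right
  · refine hy.mono_right (iSup₂_le fun j hj => ?_)
    rcases huniv j with rfl | rfl | rfl
    · exact le_sup_left
    · exact absurd rfl hj
    · exact le_sup_right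
  · refine hz.mono_right (iSup₂_le fun j hj => ?_)
    rcases huniv j with rfl | rfl | rfl
    · exact le_sup_left
    · exact le_sup_right
    · exact absurd rfl hj

end Helpers

theorem stmt9 {E : Type*} [AddCommGroup E] [Module ℂ E] [FiniteDimensional ℂ E]
    (N d : ℕ) (hdim : Module.finrank ℂ E = N) (hd : 3 * d = 2 * N)
    (V₁ V₂ V₃ : Submodule ℂ E)
    (h₁ : Module.finrank ℂ V₁ = d) (h₂ : Module.finrank ℂ V₂ = d)
    (h₃ : Module.finrank ℂ V₃ = d) :
    FeasibleStrategy (fun _ => d) ![V₁, V₂, V₃] ↔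
      (Module.finrank ℂ ↥(V₁ ⊓ V₂) = 2 * d - N ∧
       Module.finrank ℂ ↥(V₁ ⊓ V₃) = 2 * d - N ∧
       Module.finrank ℂ ↥(V₂ ⊓ V₃) = 2 * d - N) ∧
      V₁ ⊓ V₂ ⊓ V₃ = ⊥ := by
  have le12 : V₁ ⊓ V₂ ⊓ V₃ ≤ V₁ ⊓ V₂ := inf_le_left
  have le13 : V₁ ⊓ V₂ ⊓ V₃ ≤ V₁ ⊓ V₃ :=
    le_inf (inf_le_left.trans inf_le_left) inf_le_right
  -- universality facts for the small index types
  have huniv0 : ∀ k : {j : Fin 3 // j ≠ (0 : Fin 3)},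
      k = ⟨1, by decide⟩ ∨ k = ⟨2, by decide⟩ := by decide
  have huniv1 : ∀ k : {j : Fin 3 // j ≠ (1 : Fin 3)},
      k = ⟨0, by decide⟩ ∨ k = ⟨2, by decide⟩ := by decide
  have huniv2 : ∀ k : {j : Fin 3 // j ≠ (2 : Fin 3)},
      k = ⟨0, by decide⟩ ∨ k = ⟨1, by decide⟩ := by decide
  have hunivP : ∀ k : {p : Fin 3 × Fin 3 // p.1 < p.2},
      k = ⟨(0,1), by decide⟩ ∨ k = ⟨(0,2), by decide⟩ ∨ k = ⟨(1,2), by decide⟩ := by decide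
  constructor
  · rintro ⟨_, hii, _⟩
    obtain ⟨hind0, heq0⟩ := hii 0
    obtain ⟨hind1, heq1⟩ := hii 1
    obtain ⟨hind2, heq2⟩ := hii 2
    rw [iSup_eq_pair _ _ _ huniv0] at heq0
    rw [iSup_eq_pair _ _ _ huniv1] at heq1
    rw [iSup_eq_pair _ _ _ huniv2] at heq2
    have heq0' : V₁ = (V₁ ⊓ V₂) ⊔ (V₁ ⊓ V₃) := heq0
    have heq1' : V₂ = (V₂ ⊓ V₁) ⊔ (V₂ ⊓ V₃) := heq1
    have heq2' : V₃ = (V₃ ⊓ V₁) ⊔ (V₃ ⊓ V₂) := heq2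
    have hd0 : Disjoint (V₁ ⊓ V₂) (V₁ ⊓ V₃) :=
      hind0.pairwiseDisjoint (i := (⟨1, by decide⟩ : {j : Fin 3 // j ≠ (0 : Fin 3)}))
        (j := ⟨2, by decide⟩) (by decide)
    have hd1 : Disjoint (V₂ ⊓ V₁) (V₂ ⊓ V₃) :=
      hind1.pairwiseDisjoint (i := (⟨0, by decide⟩ : {j : Fin 3 // j ≠ (1 : Fin 3)}))
        (j := ⟨2, by decide⟩) (by decide)
    have hd2 : Disjoint (V₃ ⊓ V₁) (V₃ ⊓ V₂) :=
      hind2.pairwiseDisjoint (i := (⟨0, by decide⟩ : {j : Fin 3 // j ≠ (2 : Fin 3)}))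
        (j := ⟨1, by decide⟩) (by decide)
    have key : ∀ (A B C : Submodule ℂ E), A = B ⊔ C → Disjoint B C →
        Module.finrank ℂ B + Module.finrank ℂ C = Module.finrank ℂ A := by
      intro A B C hA hBC
      have := Submodule.finrank_sup_add_finrank_inf_eq B C
      rw [disjoint_iff.mp hBC, finrank_bot, ← hA] at this
      omega
    have e0 := key _ _ _ heq0' hd0
    have e1 := key _ _ _ heq1' hd1
    have e2 := key _ _ _ heq2' hd2
    rw [h₁] at e0; rw [h₂] at e1; rw [h₃] at e2
    rw [inf_comm V₂ V₁] at e1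
    rw [inf_comm V₃ V₁, inf_comm V₃ V₂] at e2
    refine ⟨⟨by omega, by omega, by omega⟩, ?_⟩
    have h : V₁ ⊓ V₂ ⊓ V₃ ≤ (V₁ ⊓ V₂) ⊓ (V₁ ⊓ V₃) := le_inf le12 le13
    rw [disjoint_iff.mp hd0] at h
    exact le_bot_iff.mp h
  · rintro ⟨⟨ha, hb, hc⟩, htriple⟩
    set m : ℕ := 2 * d - N with hm
    have hab : (V₁ ⊓ V₂) ⊓ (V₁ ⊓ V₃) = ⊥ := by
      have h : (V₁ ⊓ V₂) ⊓ (V₁ ⊓ V₃) ≤ V₁ ⊓ V₂ ⊓ V₃ :=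
        le_inf inf_le_left (inf_le_right.trans inf_le_right)
      rw [htriple] at h; exact le_bot_iff.mp h
    have hac : (V₁ ⊓ V₂) ⊓ (V₂ ⊓ V₃) = ⊥ := by
      have h : (V₁ ⊓ V₂) ⊓ (V₂ ⊓ V₃) ≤ V₁ ⊓ V₂ ⊓ V₃ :=
        le_inf inf_le_left (inf_le_right.trans inf_le_right)
      rw [htriple] at h; exact le_bot_iff.mp h
    have hbc : (V₁ ⊓ V₃) ⊓ (V₂ ⊓ V₃) = ⊥ := by
      have h : (V₁ ⊓ V₃) ⊓ (V₂ ⊓ V₃) ≤ V₁ ⊓ V₂ ⊓ V₃ :=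
        le_inf (le_inf (inf_le_left.trans inf_le_left) (inf_le_right.trans inf_le_left))
          (inf_le_left.trans inf_le_right)
      rw [htriple] at h; exact le_bot_iff.mp h
    have hac' : (V₂ ⊓ V₁) ⊓ (V₂ ⊓ V₃) = ⊥ := by rw [inf_comm V₂ V₁]; exact hac
    have hbc' : (V₃ ⊓ V₁) ⊓ (V₃ ⊓ V₂) = ⊥ := by rw [inf_comm V₃ V₁, inf_comm V₃ V₂]; exact hbc
    have key : ∀ (A B C : Submodule ℂ E), B ≤ A → C ≤ A → B ⊓ C = ⊥ →
        Module.finrank ℂ B + Module.finrank ℂ C = Module.finrank ℂ A →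
        B ⊔ C = A := by
      intro A B C hBA hCA hBC hrank
      apply Submodule.eq_of_le_of_finrank_eq (sup_le hBA hCA)
      have := Submodule.finrank_sup_add_finrank_inf_eq B C
      rw [hBC, finrank_bot] at this
      omega
    have hsup1 : (V₁ ⊓ V₂) ⊔ (V₁ ⊓ V₃) = V₁ :=
      key _ _ _ inf_le_left inf_le_left hab (by omega)
    have hsup2 : (V₂ ⊓ V₁) ⊔ (V₂ ⊓ V₃) = V₂ :=
      key _ _ _ inf_le_left inf_le_left hac'
        (by rw [inf_comm V₂ V₁, ha, hc, h₂]; omega)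
    have hsup3 : (V₃ ⊓ V₁) ⊔ (V₃ ⊓ V₂) = V₃ :=
      key _ _ _ inf_le_left inf_le_left hbc'
        (by rw [inf_comm V₃ V₁, inf_comm V₃ V₂, hb, hc, h₃]; omega)
    have h1c : V₁ ⊓ (V₂ ⊓ V₃) = ⊥ := by
      have h : V₁ ⊓ (V₂ ⊓ V₃) ≤ V₁ ⊓ V₂ ⊓ V₃ :=
        le_inf (le_inf inf_le_left (inf_le_right.trans inf_le_left))
          (inf_le_right.trans inf_le_right)
      rw [htriple] at h; exact le_bot_iff.mp h
    have hT : (V₁ ⊓ V₂) ⊔ (V₁ ⊓ V₃) ⊔ (V₂ ⊓ V₃) = ⊤ := by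
      rw [hsup1]
      apply Submodule.eq_top_of_finrank_eq
      rw [hdim]
      have := Submodule.finrank_sup_add_finrank_inf_eq V₁ (V₂ ⊓ V₃)
      rw [h1c, finrank_bot, h₁, hc] at this
      omega
    have frT : Module.finrank ℂ ((V₁ ⊓ V₂) ⊔ (V₁ ⊓ V₃) ⊔ (V₂ ⊓ V₃) : Submodule ℂ E) = N := by
      rw [hT, finrank_top, hdim]
    have dis3 : ∀ (A B C : Submodule ℂ E),
        Module.finrank ℂ A = m → Module.finrank ℂ B = m → Module.finrank ℂ C = m →
        B ⊓ C = ⊥ → Module.finrank ℂ (A ⊔ B ⊔ C : Submodule ℂ E) = N →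
        Disjoint A (B ⊔ C) := by
      intro A B C hA hB hC hBC hsup
      have e1 := Submodule.finrank_sup_add_finrank_inf_eq B C
      rw [hBC, finrank_bot] at e1
      have e2 := Submodule.finrank_sup_add_finrank_inf_eq A (B ⊔ C)
      rw [← sup_assoc, hsup] at e2
      have h0 : Module.finrank ℂ (A ⊓ (B ⊔ C) : Submodule ℂ E) = 0 := by omega
      exact disjoint_iff.mpr (Submodule.finrank_eq_zero.mp h0)
    have disA : Disjoint (V₁ ⊓ V₂) ((V₁ ⊓ V₃) ⊔ (V₂ ⊓ V₃)) :=
      dis3 _ _ _ ha hb hc hbc frT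
    have disB : Disjoint (V₁ ⊓ V₃) ((V₁ ⊓ V₂) ⊔ (V₂ ⊓ V₃)) := by
      refine dis3 _ _ _ hb ha hc hac ?_
      rw [sup_comm (V₁ ⊓ V₃) (V₁ ⊓ V₂)]
      exact frT
    have disC : Disjoint (V₂ ⊓ V₃) ((V₁ ⊓ V₂) ⊔ (V₁ ⊓ V₃)) := by
      rw [hsup1, disjoint_comm]
      exact disjoint_iff.mpr h1c
    have hcases : ∀ i : Fin 3, i = 0 ∨ i = 1 ∨ i = 2 := by decide
    refine ⟨?_, ?_, ?_, ?_⟩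
    · intro i
      rcases hcases i with rfl | rfl | rfl
      · exact h₁
      · exact h₂
      · exact h₃
    · intro i
      rcases hcases i with rfl | rfl | rfl
      · exact ⟨iSupIndep_of_two _ _ _ huniv0 (disjoint_iff.mpr hab),
          by rw [iSup_eq_pair _ _ _ huniv0]; exact hsup1.symm⟩
      · exact ⟨iSupIndep_of_two _ _ _ huniv1 (disjoint_iff.mpr hac'),
          by rw [iSup_eq_pair _ _ _ huniv1]; exact hsup2.symm⟩
      · exact ⟨iSupIndep_of_two _ _ _ huniv2 (disjoint_iff.mpr hbc'),
          by rw [iSup_eq_pair _ _ _ huniv2]; exact hsup3.symm⟩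
    · exact iSupIndep_of_three _ _ _ _ hunivP disA disB disC
    · rw [iSup_eq_triple _ _ _ _ hunivP]
      exact hT
end

section
/- Let V be a complex vector space of dimension N and let (W_{ij})_{1 ≤ i < j ≤ K} be a family of subspaces of V that is independent (its sum is direct) and satisfies Σ_{1 ≤ i < j ≤ K} W_{ij} = V. Define V_i = Σ_{j ≠ i} W_{ij} (where W_{ij} = W_{ji} for j < i). Then V_i ∩ V_j = W_{ij} for all i ≠ j, and (V_1, …, V_K) is a feasible strategy for (K, N, d_1, …, d_K) with d_i = Σ_{j ≠ i} dim W_{ij}. -/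
-- test aux lemmas
open Submodule in
lemma key_inf {E ι : Type*} [AddCommGroup E] [Module ℂ E] [DecidableEq ι]
    {f : ι → Submodule ℂ E} (h : iSupIndep f)
    (p q : ι → Prop) [DecidablePred p] [DecidablePred q] :
    (⨆ i, ⨆ _ : p i, f i) ⊓ (⨆ i, ⨆ _ : q i, f i) = ⨆ i, ⨆ _ : p i ∧ q i, f i := by
  apply le_antisymm
  · rintro x hx
    obtain ⟨hx1, hx2⟩ := Submodule.mem_inf.mp hx
    rw [Submodule.mem_biSup_iff_exists_dfinsupp] at hx1 hx2 ⊢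
    obtain ⟨a, ha⟩ := hx1
    obtain ⟨b, hb⟩ := hx2
    have hab : a.filter p = b.filter q := h.dfinsupp_lsum_injective (ha.trans hb.symm)
    refine ⟨a.filter p, ?_⟩
    have hfil : (a.filter p).filter (fun i => p i ∧ q i) = a.filter p := by
      ext i
      by_cases hp : p i <;> by_cases hq : q i <;>
        simp only [DFinsupp.filter_apply, hp, hq, and_self, if_true, if_false, true_and,
          and_true, and_false, false_and]
      have h2 : (a.filter p) i = (b.filter q) i := by rw [hab]
      simp only [DFinsupp.filter_apply, hp, hq, if_true, if_false] at h2
      exact (congrArg _ h2).symm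
    rw [hfil]
    exact ha
  · refine iSup₂_le fun i hi => le_inf ?_ ?_
    · exact le_trans (le_iSup₂ (f := fun i (_ : p i) => f i) i hi.1) le_rfl
    · exact le_trans (le_iSup₂ (f := fun i (_ : q i) => f i) i hi.2) le_rfl

open Submodule in
lemma finrank_biSup_eq {E ι : Type*} [AddCommGroup E] [Module ℂ E] [FiniteDimensional ℂ E]
    {f : ι → Submodule ℂ E} (h : iSupIndep f) (s : Finset ι) :
    Module.finrank ℂ ↥(⨆ i ∈ s, f i) = ∑ i ∈ s, Module.finrank ℂ (f i) := by
  classical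
  induction s using Finset.induction_on with
  | empty => simp
  | @insert a s ha ih =>
    rw [Finset.sum_insert ha, ← ih]
    have hsup : (⨆ i ∈ insert a s, f i) = f a ⊔ ⨆ i ∈ s, f i := by
      rw [Finset.iSup_insert]
    have hdisj : Disjoint (f a) (⨆ i ∈ s, f i) := by
      have := h.disjoint_biSup (y := (↑s : Set ι)) (by simpa using ha)
      simpa using this
    rw [hsup]
    have := Submodule.finrank_sup_add_finrank_inf_eq (f a) (⨆ i ∈ s, f i)
    rw [hdisj.eq_bot] at this
    simpa using this

theorem stmt10 {E : Type*} [AddCommGroup E] [Module ℂ E] [FiniteDimensional ℂ E]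
    (K N : ℕ) (hdim : Module.finrank ℂ E = N)
    (W : Fin K → Fin K → Submodule ℂ E) (hsymm : ∀ i j, W i j = W j i)
    (hindep : iSupIndep (fun p : {p : Fin K × Fin K // p.1 < p.2} => W p.1.1 p.1.2))
    (hsup : (⨆ p : {p : Fin K × Fin K // p.1 < p.2}, W p.1.1 p.1.2) = ⊤) :
    (∀ i j : Fin K, i ≠ j →
      (⨆ k : {k : Fin K // k ≠ i}, W i k.1) ⊓ (⨆ k : {k : Fin K // k ≠ j}, W j k.1) = W i j) ∧
    FeasibleStrategy
      (fun i => ∑ j ∈ Finset.univ.filter (· ≠ i), Module.finrank ℂ (W i j))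
      (fun i => ⨆ k : {k : Fin K // k ≠ i}, W i k.1) := by
  classical
  have hVset : ∀ i : Fin K, (⨆ k : {k : Fin K // k ≠ i}, W i k.1)
      = ⨆ q : {p : Fin K × Fin K // p.1 < p.2}, ⨆ _ : (q.1.1 = i ∨ q.1.2 = i), W q.1.1 q.1.2 := by
    intro i
    apply le_antisymm
    · refine iSup_le fun k => ?_
      rcases lt_or_gt_of_ne k.2 with hk | hk
      · calc W i k.1 = W k.1 i := hsymm i k.1
          _ ≤ _ := le_iSup₂ (f := fun (q : {p : Fin K × Fin K // p.1 < p.2})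
              (_ : q.1.1 = i ∨ q.1.2 = i) => W q.1.1 q.1.2) ⟨(k.1, i), hk⟩ (Or.inr rfl)
      · exact le_iSup₂ (f := fun (q : {p : Fin K × Fin K // p.1 < p.2})
            (_ : q.1.1 = i ∨ q.1.2 = i) => W q.1.1 q.1.2) ⟨(i, k.1), hk⟩ (Or.inl rfl)
    · refine iSup₂_le fun q hq => ?_
      rcases hq with h1 | h1
      · have hne : q.1.2 ≠ i := by
          have := q.2; rw [h1] at this; exact this.ne'
        calc W q.1.1 q.1.2 = W i q.1.2 := by rw [h1]
          _ ≤ _ := le_iSup (fun k : {k : Fin K // k ≠ i} => W i k.1) ⟨q.1.2, hne⟩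
      · have hne : q.1.1 ≠ i := by
          have := q.2; rw [h1] at this; exact this.ne
        calc W q.1.1 q.1.2 = W i q.1.1 := by rw [h1, hsymm]
          _ ≤ _ := le_iSup (fun k : {k : Fin K // k ≠ i} => W i k.1) ⟨q.1.1, hne⟩
  have hinf : ∀ i j : Fin K, i ≠ j →
      (⨆ k : {k : Fin K // k ≠ i}, W i k.1) ⊓ (⨆ k : {k : Fin K // k ≠ j}, W j k.1) = W i j := by
    intro i j hij
    rw [hVset i, hVset j, key_inf hindep]
    apply le_antisymm
    · refine iSup₂_le fun q hq => ?_
      obtain ⟨hqi, hqj⟩ := hq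
      rcases hqi with h1 | h1 <;> rcases hqj with h2 | h2
      · exact absurd (h1.symm.trans h2) hij
      · rw [h1, h2]
      · rw [h2, h1, hsymm]
      · exact absurd (h1.symm.trans h2) hij
    · rcases lt_or_gt_of_ne hij with h | h
      · exact le_iSup₂ (f := fun (q : {p : Fin K × Fin K // p.1 < p.2})
          (_ : (q.1.1 = i ∨ q.1.2 = i) ∧ (q.1.1 = j ∨ q.1.2 = j)) => W q.1.1 q.1.2)
          ⟨(i, j), h⟩ ⟨Or.inl rfl, Or.inr rfl⟩
      · calc W i j = W j i := hsymm i j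
          _ ≤ _ := le_iSup₂ (f := fun (q : {p : Fin K × Fin K // p.1 < p.2})
            (_ : (q.1.1 = i ∨ q.1.2 = i) ∧ (q.1.1 = j ∨ q.1.2 = j)) => W q.1.1 q.1.2)
            ⟨(j, i), h⟩ ⟨Or.inr rfl, Or.inl rfl⟩
  have hWindep : ∀ i : Fin K, iSupIndep (fun k : {k : Fin K // k ≠ i} => W i k.1) := by
    intro i
    have hcomp : (fun k : {k : Fin K // k ≠ i} => W i k.1) =
        (fun q : {p : Fin K × Fin K // p.1 < p.2} => W q.1.1 q.1.2) ∘
        (fun k : {k : Fin K // k ≠ i} =>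
          if h : i < k.1 then ⟨(i, k.1), h⟩
          else ⟨(k.1, i), lt_of_le_of_ne (not_lt.mp h) k.2⟩) := by
      funext k
      by_cases h : i < k.1
      · simp [h]
      · simp only [Function.comp_apply, h, dif_neg, not_false_iff]
        exact hsymm i k.1
    rw [hcomp]
    refine hindep.comp fun a b hab => ?_
    by_cases ha : i < a.1 <;> by_cases hb : i < b.1 <;>
      simp only [ha, hb, dif_pos, dif_neg, not_false_iff, Subtype.mk.injEq,
        Prod.mk.injEq] at hab
    · exact Subtype.ext hab.2
    · exact absurd hab.1.symm b.2
    · exact absurd hab.1 a.2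
    · exact Subtype.ext hab.1
  refine ⟨hinf, ?_, fun i => ⟨?_, ?_⟩, ?_, ?_⟩
  · -- finrank
    intro i
    dsimp only
    have h1 : (⨆ k : {k : Fin K // k ≠ i}, W i k.1)
        = ⨆ k ∈ (Finset.univ : Finset {k : Fin K // k ≠ i}), W i k.1 := by simp
    show Module.finrank ℂ ↥(⨆ k : {k : Fin K // k ≠ i}, W i k.1) = _
    rw [h1, finrank_biSup_eq (hWindep i)]
    rw [Finset.sum_subtype (p := fun j => j ≠ i) (Finset.univ.filter (· ≠ i)) (by simp)
      (fun j => Module.finrank ℂ (W i j))]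
  · -- independence of V i ⊓ V j
    dsimp only
    have he : (fun j : {j : Fin K // j ≠ i} =>
        (⨆ k : {k : Fin K // k ≠ i}, W i k.1) ⊓ ⨆ k : {k : Fin K // k ≠ j.1}, W j.1 k.1)
        = fun j : {j : Fin K // j ≠ i} => W i j.1 :=
      funext fun j => hinf i j.1 j.2.symm
    rw [he]
    exact hWindep i
  · -- V i = sup of intersections
    dsimp only
    have he : (fun j : {j : Fin K // j ≠ i} =>
        (⨆ k : {k : Fin K // k ≠ i}, W i k.1) ⊓ ⨆ k : {k : Fin K // k ≠ j.1}, W j.1 k.1)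
        = fun j : {j : Fin K // j ≠ i} => W i j.1 :=
      funext fun j => hinf i j.1 j.2.symm
    rw [he]
  · -- global independence
    dsimp only
    have he : (fun p : {p : Fin K × Fin K // p.1 < p.2} =>
        (⨆ k : {k : Fin K // k ≠ p.1.1}, W p.1.1 k.1) ⊓
          ⨆ k : {k : Fin K // k ≠ p.1.2}, W p.1.2 k.1)
        = fun p : {p : Fin K × Fin K // p.1 < p.2} => W p.1.1 p.1.2 :=
      funext fun p => hinf p.1.1 p.1.2 p.2.ne
    rw [he]
    exact hindep
  · -- sup = top
    dsimp only
    have he : (fun p : {p : Fin K × Fin K // p.1 < p.2} =>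
        (⨆ k : {k : Fin K // k ≠ p.1.1}, W p.1.1 k.1) ⊓
          ⨆ k : {k : Fin K // k ≠ p.1.2}, W p.1.2 k.1)
        = fun p : {p : Fin K × Fin K // p.1 < p.2} => W p.1.1 p.1.2 :=
      funext fun p => hinf p.1.1 p.1.2 p.2.ne
    calc (⨆ p : {p : Fin K × Fin K // p.1 < p.2},
        (⨆ k : {k : Fin K // k ≠ p.1.1}, W p.1.1 k.1) ⊓
          ⨆ k : {k : Fin K // k ≠ p.1.2}, W p.1.2 k.1)
        = ⨆ p : {p : Fin K × Fin K // p.1 < p.2}, W p.1.1 p.1.2 := by rw [he]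
      _ = ⊤ := hsup
end

section
/- Let V_1, V_2, V_3, V_4 be one-dimensional subspaces (lines) of the complex vector space ℂ². Then (V_1, V_2, V_3, V_4) is a feasible strategy for (4, 2, 1, 1, 1, 1) if and only if there exists a fixed-point-free involution σ of the index set {1, 2, 3, 4} such that for all indices i, j: V_i = V_j holds exactly when j ∈ {i, σ(i)}. -/
open Module Submodule

lemma eq_of_le_line {p W : Submodule ℂ (Fin 2 → ℂ)} (h : p ≤ W)
    (h1 : finrank ℂ W = 1) (hne : p ≠ ⊥) : p = W := by
  apply Submodule.eq_of_le_of_finrank_le h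
  have : 0 < finrank ℂ p := Module.finrank_pos_iff.mpr (Submodule.nontrivial_iff_ne_bot.mpr hne)
  omega

lemma line_ne_bot {W : Submodule ℂ (Fin 2 → ℂ)} (h1 : finrank ℂ W = 1) : W ≠ ⊥ := by
  intro h; rw [h] at h1; simp at h1

lemma line_inf {W₁ W₂ : Submodule ℂ (Fin 2 → ℂ)} (h1 : finrank ℂ W₁ = 1)
    (h2 : finrank ℂ W₂ = 1) (hne : W₁ ≠ W₂) : W₁ ⊓ W₂ = ⊥ := by
  by_contra h
  have e1 : W₁ ⊓ W₂ = W₁ := eq_of_le_line inf_le_left h1 h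
  have e2 : W₁ ⊓ W₂ = W₂ := eq_of_le_line inf_le_right h2 h
  exact hne (e1 ▸ e2)

lemma line_sup {W₁ W₂ : Submodule ℂ (Fin 2 → ℂ)} (h1 : finrank ℂ W₁ = 1)
    (h2 : finrank ℂ W₂ = 1) (hne : W₁ ≠ W₂) : W₁ ⊔ W₂ = ⊤ := by
  apply Submodule.eq_top_of_finrank_eq
  have := Submodule.finrank_sup_add_finrank_inf_eq W₁ W₂
  rw [line_inf h1 h2 hne, finrank_bot] at this
  simp only [Module.finrank_fin_fun]
  omega

lemma feas_of_pairing (V : Fin 4 → Submodule ℂ (Fin 2 → ℂ))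
    (hline : ∀ i, finrank ℂ (V i) = 1)
    (σ : Fin 4 → Fin 4) (hinv : ∀ i, σ (σ i) = i) (hfpf : ∀ i, σ i ≠ i)
    (hiff : ∀ i j, V i = V j ↔ (j = i ∨ j = σ i))
    (a b c d : Fin 4) (hab : a < b) (hcd : c < d) (hσa : σ a = b) (hσc : σ c = d)
    (cover : ∀ i, i = a ∨ i = b ∨ i = c ∨ i = d)
    (hac : a ≠ c) (had : a ≠ d) (hbc : b ≠ c) (hbd : b ≠ d) :
    FeasibleStrategy (fun _ => 1) V := by
  have hVab : V a = V b := (hiff a b).mpr (Or.inr hσa.symm)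
  have hVcd : V c = V d := (hiff c d).mpr (Or.inr hσc.symm)
  have hVac : V a ≠ V c := by
    intro h
    rcases (hiff a c).mp h with h' | h'
    · exact hac h'.symm
    · rw [hσa] at h'; exact hbc h'.symm
  have infac : V a ⊓ V c = ⊥ := line_inf (hline a) (hline c) hVac
  have supac : V a ⊔ V c = ⊤ := line_sup (hline a) (hline c) hVac
  have hne' : ∀ i j, j ≠ i → j ≠ σ i → V i ⊓ V j = ⊥ := by
    intro i j h1 h2
    refine line_inf (hline i) (hline j) ?_
    intro h
    rcases (hiff i j).mp h with h' | h' <;> [exact h1 h'; exact h2 h']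
  have hinfσ : ∀ i, V i ⊓ V (σ i) = V i := by
    intro i
    have : V i = V (σ i) := (hiff i (σ i)).mpr (Or.inr rfl)
    rw [← this, inf_idem]
  -- classification of "good" ordered pairs
  have goodcls : ∀ p : Fin 4 × Fin 4, p.1 < p.2 → p.2 = σ p.1 →
      p = (a, b) ∨ p = (c, d) := by
    rintro ⟨x, y⟩ hlt hgood
    simp only at hlt hgood
    rcases cover x with h | h | h | h
    · left; subst h; rw [hσa] at hgood; rw [hgood]
    · exfalso
      have hb : σ b = a := by rw [← hσa, hinv]
      rw [h, hb] at hgood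
      rw [h, hgood] at hlt
      exact absurd (lt_trans hab hlt) (lt_irrefl a)
    · right; subst h; rw [hσc] at hgood; rw [hgood]
    · exfalso
      have hd : σ d = c := by rw [← hσc, hinv]
      rw [h, hd] at hgood
      rw [h, hgood] at hlt
      exact absurd (lt_trans hcd hlt) (lt_irrefl c)
  refine ⟨hline, fun i => ⟨?_, ?_⟩, ?_, ?_⟩
  · -- (ii) independence
    intro j
    show Disjoint (V i ⊓ V j.1) (⨆ (k : {k : Fin 4 // k ≠ i}) (_ : k ≠ j), V i ⊓ V k.1)
    by_cases hj : j.1 = σ i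
    · have hrest : (⨆ (k : {k : Fin 4 // k ≠ i}) (_ : k ≠ j), V i ⊓ V k.1) = ⊥ := by
        simp only [iSup_eq_bot]
        intro k hk
        refine hne' i k.1 k.2 ?_
        intro h
        exact hk (Subtype.ext (h.trans hj.symm))
      rw [hrest]
      exact disjoint_bot_right
    · have : V i ⊓ V j.1 = ⊥ := hne' i j.1 j.2 hj
      rw [this]
      exact disjoint_bot_left
  · -- (ii) sup
    apply le_antisymm
    · have h1 := le_iSup (fun j : {j : Fin 4 // j ≠ i} => V i ⊓ V j.1) ⟨σ i, hfpf i⟩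
      simpa [hinfσ i] using h1
    · exact iSup_le fun j => inf_le_left
  · -- (iii) independence
    intro p
    show Disjoint (V p.1.1 ⊓ V p.1.2)
      (⨆ (q : {p : Fin 4 × Fin 4 // p.1 < p.2}) (_ : q ≠ p), V q.1.1 ⊓ V q.1.2)
    by_cases hp : p.1.2 = σ p.1.1
    · rcases goodcls p.1 p.2 hp with h | h
      · have hfp : V p.1.1 ⊓ V p.1.2 = V a := by rw [h]; exact inf_eq_left.mpr hVab.le
        have hrest : (⨆ (q : {q : Fin 4 × Fin 4 // q.1 < q.2}) (_ : q ≠ p), V q.1.1 ⊓ V q.1.2) ≤ V c := by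
          refine iSup_le fun q => iSup_le fun hq => ?_
          by_cases hq2 : q.1.2 = σ q.1.1
          · rcases goodcls q.1 q.2 hq2 with h' | h'
            · exact absurd (Subtype.ext (h'.trans h.symm)) hq
            · rw [h']; exact inf_le_left
          · rw [hne' q.1.1 q.1.2 (ne_of_gt q.2) hq2]
            exact bot_le
        rw [hfp]
        exact (disjoint_iff.mpr infac).mono_right hrest
      · have hfp : V p.1.1 ⊓ V p.1.2 = V c := by rw [h]; exact inf_eq_left.mpr hVcd.le
        have hrest : (⨆ (q : {q : Fin 4 × Fin 4 // q.1 < q.2}) (_ : q ≠ p), V q.1.1 ⊓ V q.1.2) ≤ V a := by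
          refine iSup_le fun q => iSup_le fun hq => ?_
          by_cases hq2 : q.1.2 = σ q.1.1
          · rcases goodcls q.1 q.2 hq2 with h' | h'
            · rw [h']; exact inf_le_left
            · exact absurd (Subtype.ext (h'.trans h.symm)) hq
          · rw [hne' q.1.1 q.1.2 (ne_of_gt q.2) hq2]
            exact bot_le
        rw [hfp]
        exact (disjoint_iff.mpr (by rw [inf_comm]; exact infac)).mono_right hrest
    · rw [hne' p.1.1 p.1.2 (ne_of_gt p.2) hp]
      exact disjoint_bot_left
  · -- (iii) sup
    apply le_antisymm le_top
    rw [← supac]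
    apply sup_le
    · have h1 := le_iSup (fun p : {p : Fin 4 × Fin 4 // p.1 < p.2} => V p.1.1 ⊓ V p.1.2)
        ⟨(a, b), hab⟩
      simpa [inf_eq_left.mpr hVab.le] using h1
    · have h1 := le_iSup (fun p : {p : Fin 4 × Fin 4 // p.1 < p.2} => V p.1.1 ⊓ V p.1.2)
        ⟨(c, d), hcd⟩
      simpa [inf_eq_left.mpr hVcd.le] using h1

theorem stmt12 (V : Fin 4 → Submodule ℂ (Fin 2 → ℂ))
    (hline : ∀ i, Module.finrank ℂ (V i) = 1) :
    FeasibleStrategy (fun _ => 1) V ↔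
      ∃ σ : Fin 4 → Fin 4, (∀ i, σ (σ i) = i) ∧ (∀ i, σ i ≠ i) ∧
        ∀ i j, V i = V j ↔ (j = i ∨ j = σ i) := by
  constructor
  · rintro ⟨hd, h2, h3, h4⟩
    -- existence: every line is matched with another one
    have hex : ∀ i, ∃ j, j ≠ i ∧ V i = V j := by
      intro i
      have hsup := (h2 i).2
      have hbot : V i ≠ ⊥ := line_ne_bot (hline i)
      by_contra hcon
      push_neg at hcon
      apply hbot
      rw [hsup, iSup_eq_bot]
      intro j
      refine line_inf (hline i) (hline j.1) ?_
      intro h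
      exact hcon j.1 j.2 h
    -- uniqueness
    have huniq : ∀ i j j', j ≠ i → j' ≠ i → V i = V j → V i = V j' → j = j' := by
      intro i j j' hj hj' hVj hVj'
      by_contra hne
      have hind : Disjoint (V i ⊓ V j)
          (⨆ (k : {k : Fin 4 // k ≠ i}) (_ : k ≠ (⟨j, hj⟩ : {k : Fin 4 // k ≠ i})), V i ⊓ V k.1) :=
        (h2 i).1 ⟨j, hj⟩
      have h1 : V i ⊓ V j = V i := inf_eq_left.mpr hVj.le
      have h2' : V i ≤ ⨆ (k : {k : Fin 4 // k ≠ i}) (_ : k ≠ (⟨j, hj⟩ : {k : Fin 4 // k ≠ i})),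
          V i ⊓ V k.1 := by
        have := le_iSup₂ (f := fun (k : {k : Fin 4 // k ≠ i})
            (_ : k ≠ (⟨j, hj⟩ : {k : Fin 4 // k ≠ i})) => V i ⊓ V k.1)
          ⟨j', hj'⟩ (by simp [Subtype.ext_iff]; exact fun h => hne h.symm)
        calc V i = V i ⊓ V j' := (inf_eq_left.mpr hVj'.le).symm
          _ ≤ _ := this
      rw [h1] at hind
      exact line_ne_bot (hline i) (hind.eq_bot_of_le h2')
    choose σ hσ1 hσ2 using hex
    refine ⟨σ, ?_, hσ1, ?_⟩
    · intro i
      exact huniq (σ i) (σ (σ i)) i (hσ1 (σ i)) (Ne.symm (hσ1 i)) (hσ2 (σ i)) (hσ2 i).symm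
    · intro i j
      constructor
      · intro h
        by_cases hji : j = i
        · exact Or.inl hji
        · exact Or.inr (huniq i j (σ i) hji (hσ1 i) h (hσ2 i))
      · rintro (rfl | rfl)
        · rfl
        · exact hσ2 i
  · rintro ⟨σ, hinv, hfpf, hiff⟩
    have hcases : ∀ x : Fin 4, x ≠ 0 → x = 1 ∨ x = 2 ∨ x = 3 := by decide
    have hinj : ∀ x y : Fin 4, σ x = σ y → x = y := by
      intro x y h
      have := congrArg σ h
      rwa [hinv, hinv] at this
    rcases hcases (σ 0) (hfpf 0) with h0 | h0 | h0
    · -- σ 0 = 1, pairing (0,1),(2,3)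
      have h2 : σ 2 = 3 := by
        rcases hcases (σ 2) (fun h => by
          have : (2 : Fin 4) = σ 0 := by rw [← h, hinv]
          rw [h0] at this; exact absurd this (by decide)) with h | h | h
        · exfalso
          have : (2 : Fin 4) = 0 := hinj 2 0 (h.trans h0.symm)
          exact absurd this (by decide)
        · exact absurd h (hfpf 2)
        · exact h
      exact feas_of_pairing V hline σ hinv hfpf hiff 0 1 2 3 (by decide) (by decide)
        h0 h2 (by decide) (by decide) (by decide) (by decide) (by decide)
    · -- σ 0 = 2, pairing (0,2),(1,3)
      have h2 : σ 1 = 3 := by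
        rcases hcases (σ 1) (fun h => by
          have : (1 : Fin 4) = σ 0 := by rw [← h, hinv]
          rw [h0] at this; exact absurd this (by decide)) with h | h | h
        · exact absurd h (hfpf 1)
        · exfalso
          have : (1 : Fin 4) = 0 := hinj 1 0 (h.trans h0.symm)
          exact absurd this (by decide)
        · exact h
      exact feas_of_pairing V hline σ hinv hfpf hiff 0 2 1 3 (by decide) (by decide)
        h0 h2 (by decide) (by decide) (by decide) (by decide) (by decide)
    · -- σ 0 = 3, pairing (0,3),(1,2)
      have h2 : σ 1 = 2 := by
        rcases hcases (σ 1) (fun h => by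
          have : (1 : Fin 4) = σ 0 := by rw [← h, hinv]
          rw [h0] at this; exact absurd this (by decide)) with h | h | h
        · exact absurd h (hfpf 1)
        · exact h
        · exfalso
          have : (1 : Fin 4) = 0 := hinj 1 0 (h.trans h0.symm)
          exact absurd this (by decide)
      exact feas_of_pairing V hline σ hinv hfpf hiff 0 3 1 2 (by decide) (by decide)
        h0 h2 (by decide) (by decide) (by decide) (by decide) (by decide)
end

section
/- Let V_1, V_2, V_3 be two-dimensional subspaces (planes) of the complex vector space ℂ³. Then (V_1, V_2, V_3) is a feasible strategy for (3, 3, 2, 2, 2) if and only if V_1 ∩ V_2 ∩ V_3 = 0. -/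
theorem stmt13 (V₁ V₂ V₃ : Submodule ℂ (Fin 3 → ℂ))
    (h₁ : Module.finrank ℂ V₁ = 2) (h₂ : Module.finrank ℂ V₂ = 2)
    (h₃ : Module.finrank ℂ V₃ = 2) :
    FeasibleStrategy (fun _ => 2) ![V₁, V₂, V₃] ↔ V₁ ⊓ V₂ ⊓ V₃ = ⊥ := by
  open Module Submodule in
  have tri : ∀ q : {p : Fin 3 × Fin 3 // p.1 < p.2},
      q = ⟨(0,1), by decide⟩ ∨ q = ⟨(0,2), by decide⟩ ∨ q = ⟨(1,2), by decide⟩ := by decide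
  constructor
  · rintro ⟨-, -, hind, -⟩
    have hd := hind (⟨(0,1), by decide⟩ : {p : Fin 3 × Fin 3 // p.1 < p.2})
    rw [eq_bot_iff]
    refine le_trans (le_inf inf_le_left ?_) hd.le_bot
    refine le_iSup_of_le (⟨(1,2), by decide⟩ : {p : Fin 3 × Fin 3 // p.1 < p.2})
      (le_iSup_of_le (by decide) ?_)
    exact le_inf (inf_le_left.trans inf_le_right) inf_le_right
  · intro hbot
    have hr3 : Module.finrank ℂ (Fin 3 → ℂ) = 3 := by simp
    have dAB : Disjoint (V₁ ⊓ V₂) (V₁ ⊓ V₃) := by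
      rw [disjoint_iff, eq_bot_iff, ← hbot]
      intro x hx; simp only [Submodule.mem_inf] at hx ⊢; tauto
    have dAC : Disjoint (V₁ ⊓ V₂) (V₂ ⊓ V₃) := by
      rw [disjoint_iff, eq_bot_iff, ← hbot]
      intro x hx; simp only [Submodule.mem_inf] at hx ⊢; tauto
    have dBC : Disjoint (V₁ ⊓ V₃) (V₂ ⊓ V₃) := by
      rw [disjoint_iff, eq_bot_iff, ← hbot]
      intro x hx; simp only [Submodule.mem_inf] at hx ⊢; tauto
    have dAV3 : Disjoint (V₁ ⊓ V₂) V₃ := disjoint_iff.mpr hbot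
    have dBV2 : Disjoint (V₁ ⊓ V₃) V₂ := by
      rw [disjoint_iff, eq_bot_iff, ← hbot]
      intro x hx; simp only [Submodule.mem_inf] at hx ⊢; tauto
    have dCV1 : Disjoint (V₂ ⊓ V₃) V₁ := by
      rw [disjoint_iff, eq_bot_iff, ← hbot]
      intro x hx; simp only [Submodule.mem_inf] at hx ⊢; tauto
    have rA : 1 ≤ Module.finrank ℂ ↥(V₁ ⊓ V₂) := by
      have h := Submodule.finrank_sup_add_finrank_inf_eq V₁ V₂
      have h' := (V₁ ⊔ V₂).finrank_le
      omega
    have rB : 1 ≤ Module.finrank ℂ ↥(V₁ ⊓ V₃) := by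
      have h := Submodule.finrank_sup_add_finrank_inf_eq V₁ V₃
      have h' := (V₁ ⊔ V₃).finrank_le
      omega
    have rC : 1 ≤ Module.finrank ℂ ↥(V₂ ⊓ V₃) := by
      have h := Submodule.finrank_sup_add_finrank_inf_eq V₂ V₃
      have h' := (V₂ ⊔ V₃).finrank_le
      omega
    have sAB := Submodule.finrank_sup_add_finrank_inf_eq (V₁ ⊓ V₂) (V₁ ⊓ V₃)
    have sAC := Submodule.finrank_sup_add_finrank_inf_eq (V₁ ⊓ V₂) (V₂ ⊓ V₃)
    have sBC := Submodule.finrank_sup_add_finrank_inf_eq (V₁ ⊓ V₃) (V₂ ⊓ V₃)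
    rw [dAB.eq_bot, finrank_bot] at sAB
    rw [dAC.eq_bot, finrank_bot] at sAC
    rw [dBC.eq_bot, finrank_bot] at sBC
    have mAB : Module.finrank ℂ ↥(V₁ ⊓ V₂ ⊔ V₁ ⊓ V₃) ≤ 2 :=
      h₁ ▸ Submodule.finrank_mono (sup_le inf_le_left inf_le_left)
    have mBC : Module.finrank ℂ ↥(V₁ ⊓ V₃ ⊔ V₂ ⊓ V₃) ≤ 2 :=
      h₃ ▸ Submodule.finrank_mono (sup_le inf_le_right inf_le_right)
    have rA1 : Module.finrank ℂ ↥(V₁ ⊓ V₂) = 1 := by omega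
    have rB1 : Module.finrank ℂ ↥(V₁ ⊓ V₃) = 1 := by omega
    have rC1 : Module.finrank ℂ ↥(V₂ ⊓ V₃) = 1 := by omega
    have eAB : V₁ ⊓ V₂ ⊔ V₁ ⊓ V₃ = V₁ :=
      Submodule.eq_of_le_of_finrank_eq (sup_le inf_le_left inf_le_left) (by omega)
    have eAC : V₁ ⊓ V₂ ⊔ V₂ ⊓ V₃ = V₂ :=
      Submodule.eq_of_le_of_finrank_eq (sup_le inf_le_right inf_le_left) (by omega)
    have eBC : V₁ ⊓ V₃ ⊔ V₂ ⊓ V₃ = V₃ :=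
      Submodule.eq_of_le_of_finrank_eq (sup_le inf_le_right inf_le_right) (by omega)
    have eTop : V₁ ⊓ V₂ ⊔ (V₁ ⊓ V₃ ⊔ V₂ ⊓ V₃) = ⊤ := by
      rw [eBC]
      have s1 := Submodule.finrank_sup_add_finrank_inf_eq (V₁ ⊓ V₂) V₃
      rw [dAV3.eq_bot, finrank_bot] at s1
      exact Submodule.eq_top_of_finrank_eq (by omega)
    refine ⟨fun i => by fin_cases i <;> assumption, fun i => ?_, ?_, ?_⟩
    · fin_cases i
      · have tri0 : ∀ j : {j : Fin 3 // j ≠ (0 : Fin 3)},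
            j = ⟨1, by decide⟩ ∨ j = ⟨2, by decide⟩ := by decide
        refine ⟨(iSupIndep_pair (by decide) tri0).mpr dAB, le_antisymm ?_ (iSup_le ?_)⟩
        · refine le_trans eAB.ge (sup_le ?_ ?_)
          · exact le_iSup_of_le ⟨1, by decide⟩ le_rfl
          · exact le_iSup_of_le ⟨2, by decide⟩ le_rfl
        · intro j; rcases tri0 j with rfl | rfl <;> exact inf_le_left
      · have tri1 : ∀ j : {j : Fin 3 // j ≠ (1 : Fin 3)},
            j = ⟨0, by decide⟩ ∨ j = ⟨2, by decide⟩ := by decide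
        refine ⟨(iSupIndep_pair (by decide) tri1).mpr ?_, le_antisymm ?_ (iSup_le ?_)⟩
        · exact dAC.mono (le_inf inf_le_right inf_le_left) le_rfl
        · refine le_trans eAC.ge (sup_le ?_ ?_)
          · exact le_iSup_of_le ⟨0, by decide⟩ (le_inf inf_le_right inf_le_left)
          · exact le_iSup_of_le ⟨2, by decide⟩ le_rfl
        · intro j; rcases tri1 j with rfl | rfl <;> exact inf_le_left
      · have tri2 : ∀ j : {j : Fin 3 // j ≠ (2 : Fin 3)},
            j = ⟨0, by decide⟩ ∨ j = ⟨1, by decide⟩ := by decide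
        refine ⟨(iSupIndep_pair (by decide) tri2).mpr ?_, le_antisymm ?_ (iSup_le ?_)⟩
        · refine dBC.mono (le_inf inf_le_right inf_le_left) (le_inf inf_le_right inf_le_left)
        · refine le_trans eBC.ge (sup_le ?_ ?_)
          · exact le_iSup_of_le ⟨0, by decide⟩ (le_inf inf_le_right inf_le_left)
          · exact le_iSup_of_le ⟨1, by decide⟩ (le_inf inf_le_right inf_le_left)
        · intro j; rcases tri2 j with rfl | rfl <;> exact inf_le_left
    · intro p
      rcases tri p with rfl | rfl | rfl
      · refine Disjoint.mono_right ?_ (dAV3.mono_right eBC.le)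
        refine iSup_le fun q => iSup_le fun hq => ?_
        rcases tri q with rfl | rfl | rfl
        · exact absurd rfl hq
        · exact le_sup_left
        · exact le_sup_right
      · refine Disjoint.mono_right ?_ (dBV2.mono_right eAC.le)
        refine iSup_le fun q => iSup_le fun hq => ?_
        rcases tri q with rfl | rfl | rfl
        · exact le_sup_left
        · exact absurd rfl hq
        · exact le_sup_right
      · refine Disjoint.mono_right ?_ (dCV1.mono_right eAB.le)
        refine iSup_le fun q => iSup_le fun hq => ?_
        rcases tri q with rfl | rfl | rfl
        · exact le_sup_left
        · exact le_sup_right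
        · exact absurd rfl hq
    · refine le_antisymm le_top (le_trans eTop.ge (sup_le ?_ (sup_le ?_ ?_)))
      · exact le_iSup_of_le ⟨(0,1), by decide⟩ le_rfl
      · exact le_iSup_of_le ⟨(0,2), by decide⟩ le_rfl
      · exact le_iSup_of_le ⟨(1,2), by decide⟩ le_rfl
end

section
/- Let u_1, u_2, u_3 be nonzero vectors in the Hermitian inner product space ℂ³, and for each i let V_i = (ℂ·u_i)^⊥ be the orthogonal complement of the line spanned by u_i (so each V_i is a plane). Then (V_1, V_2, V_3) is a feasible strategy for (3, 3, 2, 2, 2) if and only if the determinant of the 3×3 matrix whose columns are u_1, u_2, u_3 is nonzero. -/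
local notation "⟪" x ", " y "⟫" => @inner ℂ _ _ x y

private def cth : Fin 3 → Fin 3 → Fin 3 := ![![0,2,1],![2,0,0],![1,0,0]]
private def prr : Fin 3 → Fin 3 × Fin 3 := ![(1,2),(0,2),(0,1)]

private lemma L1 : ∀ i j : Fin 3, i ≠ j → cth i j ≠ i ∧ cth i j ≠ j := by decide
private lemma L2 : ∀ i j m : Fin 3, i ≠ j → m = i ∨ m = j ∨ m = cth i j := by decide
private lemma L3 : ∀ i j j' : Fin 3, j ≠ i → j' ≠ i → cth i j = cth i j' → j = j' := by decide
private lemma L4 : ∀ i k : Fin 3, k ≠ i → cth i k ≠ i ∧ cth i (cth i k) = k := by decide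
private lemma L5 : ∀ p q : Fin 3 × Fin 3, p.1 < p.2 → q.1 < q.2 →
    cth p.1 p.2 = cth q.1 q.2 → p = q := by decide
private lemma L6 : ∀ k : Fin 3, (prr k).1 < (prr k).2 ∧ cth (prr k).1 (prr k).2 = k := by decide

private lemma orthotop {u : Fin 3 → EuclideanSpace ℂ (Fin 3)}
    (hspan : Submodule.span ℂ (Set.range u) = ⊤) (x : EuclideanSpace ℂ (Fin 3))
    (hx : ∀ m, ⟪u m, x⟫ = 0) : x = 0 := by
  have hx' : x ∈ (Submodule.span ℂ (Set.range u))ᗮ := by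
    rw [Submodule.mem_orthogonal]
    intro y hy
    induction hy using Submodule.span_induction with
    | mem y h => obtain ⟨m, rfl⟩ := h; exact hx m
    | zero => simp
    | add a b _ _ ha hb => rw [inner_add_left, ha, hb, add_zero]
    | smul c a _ ha => rw [inner_smul_left, ha, mul_zero]
  rw [hspan, Submodule.top_orthogonal_eq_bot, Submodule.mem_bot] at hx'
  exact hx'

theorem stmt14 (u : Fin 3 → EuclideanSpace ℂ (Fin 3)) (hu : ∀ i, u i ≠ 0) :
    FeasibleStrategy (fun _ => 2) (fun i => (ℂ ∙ u i)ᗮ) ↔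
      Matrix.det (Matrix.of fun i j => u j i) ≠ 0 := by
  have key : LinearIndependent ℂ u ↔ Matrix.det (Matrix.of fun i j => u j i) ≠ 0 := by
    rw [← isUnit_iff_ne_zero, ← Matrix.isUnit_iff_isUnit_det,
      ← Matrix.linearIndependent_cols_iff_isUnit]
    exact (LinearMap.linearIndependent_iff (WithLp.linearEquiv 2 ℂ (Fin 3 → ℂ)).toLinearMap
      (by simp)).symm
  constructor
  · -- feasible → det ≠ 0
    rintro ⟨-, -, hind, -⟩ hdet0
    have hnLI : ¬ LinearIndependent ℂ u := fun h => (key.mp h) hdet0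
    have hspan_ne : Submodule.span ℂ (Set.range u) ≠ ⊤ := by
      intro hsp
      exact hnLI (linearIndependent_of_top_le_span_of_card_eq_finrank hsp.ge (by simp))
    have hne : (Submodule.span ℂ (Set.range u))ᗮ ≠ ⊥ :=
      fun hbot => hspan_ne (Submodule.orthogonal_eq_bot_iff.mp hbot)
    obtain ⟨v, hvmem, hvne⟩ := (Submodule.ne_bot_iff _).mp hne
    have hv : ∀ m, v ∈ (ℂ ∙ u m)ᗮ := fun m =>
      Submodule.mem_orthogonal_singleton_iff_inner_right.mpr
        ((Submodule.mem_orthogonal _ _).mp hvmem (u m)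
          (Submodule.subset_span (Set.mem_range_self m)))
    set a : {p : Fin 3 × Fin 3 // p.1 < p.2} := ⟨(0, 1), by decide⟩ with ha
    set b : {p : Fin 3 × Fin 3 // p.1 < p.2} := ⟨(0, 2), by decide⟩ with hb
    have hba : b ≠ a := by rw [ha, hb]; intro h; simp [Subtype.ext_iff, Prod.ext_iff] at h
    have hd := hind a
    have hvb : v ∈ ⨆ c, ⨆ (_ : c ≠ a),
        ((fun i => (ℂ ∙ u i)ᗮ) c.1.1 ⊓ (fun i => (ℂ ∙ u i)ᗮ) c.1.2) :=
      Submodule.mem_iSup_of_mem b (Submodule.mem_iSup_of_mem hba ⟨hv _, hv _⟩)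
    exact hvne (Submodule.disjoint_def.mp hd v ⟨hv _, hv _⟩ hvb)
  · -- det ≠ 0 → feasible
    intro hdet
    have hLI : LinearIndependent ℂ u := key.mpr hdet
    have hcard : Fintype.card (Fin 3) = Module.finrank ℂ (EuclideanSpace ℂ (Fin 3)) := by simp
    have hspan : Submodule.span ℂ (Set.range u) = ⊤ :=
      hLI.span_eq_top_of_card_eq_finrank hcard
    -- dual family w
    obtain ⟨w, hw⟩ : ∃ w : Fin 3 → EuclideanSpace ℂ (Fin 3),
        ∀ k m, ⟪u m, w k⟫ = if m = k then 1 else 0 := by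
      set Bu : Module.Basis (Fin 3) ℂ (EuclideanSpace ℂ (Fin 3)) := Module.Basis.mk hLI hspan.ge with hBu
      refine ⟨fun k => (InnerProductSpace.toDual ℂ _).symm
        (LinearMap.toContinuousLinearMap (Bu.coord k)), fun k m => ?_⟩
      rw [← inner_conj_symm, InnerProductSpace.toDual_symm_apply]
      have hm : ∀ m, u m = Bu m := fun m => (Module.Basis.mk_apply hLI hspan.ge m).symm
      by_cases h : m = k <;>
        simp [LinearMap.coe_toContinuousLinearMap', hm, Module.Basis.coord_apply, Module.Basis.repr_self,
          Finsupp.single_apply, h]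
    have expand : ∀ x : EuclideanSpace ℂ (Fin 3), x = ∑ k, ⟪u k, x⟫ • w k := by
      intro x
      have h := orthotop hspan (x - ∑ k, ⟪u k, x⟫ • w k) ?_
      · exact (sub_eq_zero.mp h)
      intro m
      rw [inner_sub_right, inner_sum]
      simp only [inner_smul_right, hw, mul_ite, mul_one, mul_zero, Finset.sum_ite_eq,
        Finset.mem_univ, if_true, sub_self]
    have hw_li : LinearIndependent ℂ w := by
      rw [Fintype.linearIndependent_iff]
      intro g hg m
      have h := congrArg (fun y => ⟪u m, y⟫) hg
      simpa only [inner_sum, inner_smul_right, hw, mul_ite, mul_one, mul_zero,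
        Finset.sum_ite_eq, Finset.mem_univ, if_true, inner_zero_right] using h
    have inf_eq : ∀ i j : Fin 3, i ≠ j →
        (ℂ ∙ u i)ᗮ ⊓ (ℂ ∙ u j)ᗮ = ℂ ∙ w (cth i j) := by
      intro i j hij
      apply le_antisymm
      · intro x hx
        rw [Submodule.mem_inf] at hx
        obtain ⟨hxi, hxj⟩ := hx
        rw [Submodule.mem_orthogonal_singleton_iff_inner_right] at hxi hxj
        have hcoef : ∀ k, k ≠ cth i j → ⟪u k, x⟫ = 0 := by
          intro k hk
          rcases L2 i j k hij with rfl | rfl | rfl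
          exacts [hxi, hxj, absurd rfl hk]
        have hsum : ∑ k, ⟪u k, x⟫ • w k = ⟪u (cth i j), x⟫ • w (cth i j) :=
          Finset.sum_eq_single _ (fun c _ hc => by rw [hcoef c hc, zero_smul]) (by simp)
        rw [expand x, hsum]
        exact Submodule.smul_mem _ _ (Submodule.mem_span_singleton_self _)
      · rw [Submodule.span_singleton_le_iff_mem, Submodule.mem_inf]
        constructor <;> rw [Submodule.mem_orthogonal_singleton_iff_inner_right, hw, if_neg]
        · exact fun h => (L1 i j hij).1 h.symm
        · exact fun h => (L1 i j hij).2 h.symm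
    refine ⟨?_, ?_, ?_, ?_⟩
    · -- (i)
      intro i
      show Module.finrank ℂ ((ℂ ∙ u i)ᗮ : Submodule ℂ (EuclideanSpace ℂ (Fin 3))) = 2
      have h1 : Module.finrank ℂ (ℂ ∙ u i) = 1 := finrank_span_singleton (hu i)
      have h2 := Submodule.finrank_add_finrank_orthogonal (𝕜 := ℂ) (K := ℂ ∙ u i)
      have h3 : Module.finrank ℂ (EuclideanSpace ℂ (Fin 3)) = 3 := by simp
      simp only [h1, h3] at h2
      omega
    · -- (ii)
      intro i
      constructor
      · have hinj : Function.Injective (fun j : {j : Fin 3 // j ≠ i} => cth i j.1) :=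
          fun p q hpq => Subtype.ext (L3 i p.1 q.1 p.2 q.2 hpq)
        have h := (hw_li.comp _ hinj).iSupIndep_span_singleton
        show iSupIndep (fun j : {j : Fin 3 // j ≠ i} => (ℂ ∙ u i)ᗮ ⊓ (ℂ ∙ u j.1)ᗮ)
        have heq : (fun j : {j : Fin 3 // j ≠ i} => (ℂ ∙ u i)ᗮ ⊓ (ℂ ∙ u j.1)ᗮ) =
            fun j => ℂ ∙ w (cth i j.1) := funext fun j => inf_eq i j.1 (Ne.symm j.2)
        rw [heq]
        exact h
      · show (ℂ ∙ u i)ᗮ = ⨆ j : {j : Fin 3 // j ≠ i}, (ℂ ∙ u i)ᗮ ⊓ (ℂ ∙ u j.1)ᗮ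
        apply le_antisymm
        · intro x hx
          rw [Submodule.mem_orthogonal_singleton_iff_inner_right] at hx
          rw [expand x]
          apply Submodule.sum_mem
          intro k _
          by_cases hk : k = i
          · subst hk
            rw [hx, zero_smul]
            exact Submodule.zero_mem _
          · obtain ⟨h41, h42⟩ := L4 i k hk
            have hmem : ⟪u k, x⟫ • w k ∈ (ℂ ∙ u i)ᗮ ⊓ (ℂ ∙ u (cth i k))ᗮ := by
              rw [inf_eq i (cth i k) (Ne.symm h41), h42]
              exact Submodule.smul_mem _ _ (Submodule.mem_span_singleton_self _)
            exact Submodule.mem_iSup_of_mem ⟨cth i k, h41⟩ hmem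
        · exact iSup_le fun j => inf_le_left
    · -- (iii) independence
      have hinj : Function.Injective
          (fun p : {p : Fin 3 × Fin 3 // p.1 < p.2} => cth p.1.1 p.1.2) :=
        fun p q hpq => Subtype.ext (L5 p.1 q.1 p.2 q.2 hpq)
      have h := (hw_li.comp _ hinj).iSupIndep_span_singleton
      show iSupIndep (fun p : {p : Fin 3 × Fin 3 // p.1 < p.2} =>
        (ℂ ∙ u p.1.1)ᗮ ⊓ (ℂ ∙ u p.1.2)ᗮ)
      have heq : (fun p : {p : Fin 3 × Fin 3 // p.1 < p.2} =>
          (ℂ ∙ u p.1.1)ᗮ ⊓ (ℂ ∙ u p.1.2)ᗮ) =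
          fun p => ℂ ∙ w (cth p.1.1 p.1.2) := funext fun p => inf_eq _ _ (ne_of_lt p.2)
      rw [heq]
      exact h
    · -- (iii) sup = ⊤
      apply eq_top_iff.mpr
      intro x _
      rw [expand x]
      apply Submodule.sum_mem
      intro k _
      obtain ⟨h61, h62⟩ := L6 k
      have hm : ⟪u k, x⟫ • w k ∈ (ℂ ∙ u (prr k).1)ᗮ ⊓ (ℂ ∙ u (prr k).2)ᗮ := by
        rw [inf_eq _ _ (ne_of_lt h61), h62]
        exact Submodule.smul_mem _ _ (Submodule.mem_span_singleton_self _)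
      exact Submodule.mem_iSup_of_mem ⟨prr k, h61⟩ hm
end
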